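/- With A and A' as in the star-extension construction (A' has one extra state q, all states initial and final, and weight-0 ⋆-transitions connecting final states to initial states of A directly and through q), the following inequalities hold: min(inf_{u∈Σ⁺} [[A]](u)/|u|, 0) ≤ inf_{w∈(Σ')⁺} [[A']](w)/|w| and inf_{w∈(Σ')⁺} [[A']](w)/|w| ≤ inf_{u∈Σ⁺} [[A]](u)/(|u|+1). In particular, [[A]](w) ≥ 0 for all w ∈ Σ⁺ if and only if [[A']](w) ≥ 0 for all w ∈ (Σ')⁺. -/

import Mathlib

open Filter

/-- The tropical (max-plus) semiring ℤ ∪ {-∞}: addition is max (lattice sup),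
`+` is the tropical product with `⊥` absorbing. -/
abbrev Zmax : Type := WithBot ℤ

/-- Square matrices over `Zmax`. -/
abbrev Mat (d : ℕ) : Type := Fin d → Fin d → Zmax

/-- Tropical matrix product: `(A⊗B) i j = max_k (A i k + B k j)`. -/
def tmul {d : ℕ} (A B : Mat d) : Mat d :=
  fun i j => Finset.univ.sup fun k => A i k + B k j

/-- Maximal entry of a matrix (`-∞` for the all-`⊥` matrix). -/
def tnorm {d : ℕ} (M : Mat d) : Zmax :=
  Finset.univ.sup fun i => Finset.univ.sup fun j => M i j

/-- Product of a list of matrices (junk value, the all-`⊥` matrix, on `[]`;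
only used on nonempty lists). -/
def prodL {d : ℕ} : List (Mat d) → Mat d
  | [] => fun _ _ => ⊥
  | [M] => M
  | M :: N :: L => tmul M (prodL (N :: L))

/-- Tropical identity matrix. -/
def tId (d : ℕ) : Mat d := fun i j => if i = j then (0 : Zmax) else ⊥

/-- Tropical matrix power. -/
def tpow {d : ℕ} (M : Mat d) : ℕ → Mat d
  | 0 => tId d
  | n+1 => tmul M (tpow M n)

/-- The subsemigroup generated by a set of matrices: all nonempty finite products. -/
def semi {d : ℕ} (Γ : Set (Mat d)) : Set (Mat d) :=
  {M | ∃ L : List (Mat d), L ≠ [] ∧ (∀ N ∈ L, N ∈ Γ) ∧ prodL L = M}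

/-- Embedding of `Zmax = ℤ ∪ {-∞}` into `EReal`. -/
noncomputable def z2e (x : Zmax) : EReal :=
  WithBot.recBotCoe ⊥ (fun n : ℤ => ((n : ℝ) : EReal)) x

/-- `minNorm Γ ℓ` is the minimum over all products of `ℓ` matrices from `Γ`
of `‖M₁⋯M_ℓ‖_∞ / ℓ`, as an extended real. -/
noncomputable def minNorm {d : ℕ} (Γ : Set (Mat d)) (ℓ : ℕ) : EReal :=
  sInf {x | ∃ L : List (Mat d), L.length = ℓ ∧ (∀ N ∈ L, N ∈ Γ) ∧
    x = z2e (tnorm (prodL L)) / (ℓ : EReal)}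

/-- Joint spectral radius: `inf_{ℓ>0} min{ ‖M₁⋯M_ℓ‖_∞/ℓ : Mᵢ ∈ Γ }`. -/
noncomputable def jsr {d : ℕ} (Γ : Set (Mat d)) : EReal :=
  ⨅ (ℓ : ℕ) (_ : 0 < ℓ), minNorm Γ ℓ

/-- Weight of the cycle `c 0 → c 1 → ⋯ → c ℓ → c 0` (length `ℓ+1`),
addition of `Fin (ℓ+1)` being cyclic. -/
def cycWeight {d : ℕ} (M : Mat d) {ℓ : ℕ} (c : Fin (ℓ+1) → Fin d) : Zmax :=
  ∑ k : Fin (ℓ+1), M (c k) (c (k+1))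

/-- Tropical spectral radius of a single matrix: the maximal average weight of
cycles in the graph of `M` (and `-∞` if there is no cycle of finite weight). -/
noncomputable def rho {d : ℕ} (M : Mat d) : EReal :=
  ⨆ (ℓ : ℕ) (c : Fin (ℓ+1) → Fin d), z2e (cycWeight M c) / ((ℓ+1 : ℕ) : EReal)

/-- A critical cycle: a cycle with finite weight whose average weight is `rho M`. -/
def IsCritCycle {d : ℕ} (M : Mat d) {ℓ : ℕ} (c : Fin (ℓ+1) → Fin d) : Prop :=
  cycWeight M c ≠ ⊥ ∧ z2e (cycWeight M c) / ((ℓ+1 : ℕ) : EReal) = rho M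

/-- Edges of the critical graph: edges lying on some critical cycle. -/
def critEdge {d : ℕ} (M : Mat d) (i j : Fin d) : Prop :=
  ∃ (ℓ : ℕ) (c : Fin (ℓ+1) → Fin d) (k : Fin (ℓ+1)),
    IsCritCycle M c ∧ c k = i ∧ c (k+1) = j

/-- Vertices of the critical graph. -/
def critVertex {d : ℕ} (M : Mat d) (i : Fin d) : Prop :=
  ∃ j, critEdge M i j ∨ critEdge M j i

/-- Strongly connected components of the critical graph: maximal sets of critical
vertices that are pairwise connected by paths in the critical graph. -/
def IsSCC {d : ℕ} (M : Mat d) (S : Set (Fin d)) : Prop :=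
  (∀ i ∈ S, critVertex M i) ∧
  (∀ i ∈ S, ∀ j ∈ S, Relation.ReflTransGen (critEdge M) i j) ∧
  (∀ T : Set (Fin d), S ⊆ T → (∀ i ∈ T, critVertex M i) →
    (∀ i ∈ T, ∀ j ∈ T, Relation.ReflTransGen (critEdge M) i j) → T = S)

/-- Greatest common divisor of a set of natural numbers. -/
noncomputable def setGcd (A : Set ℕ) : ℕ :=
  sInf {g | (∀ a ∈ A, g ∣ a) ∧ ∀ h, (∀ a ∈ A, h ∣ a) → h ∣ g}

/-- Cyclicity of a strongly connected component `S` of the critical graph of `M`: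
the gcd of the lengths of the cycles of the critical graph lying in `S`. -/
noncomputable def cyclicity {d : ℕ} (M : Mat d) (S : Set (Fin d)) : ℕ :=
  setGcd {n | ∃ (ℓ : ℕ) (c : Fin (ℓ+1) → Fin d), n = ℓ + 1 ∧
    (∀ k, critEdge M (c k) (c (k+1))) ∧ (∀ k, c k ∈ S)}

/-- Ultimate rank of a matrix: the sum of the cyclicities of the strongly
connected components of its critical graph. -/
noncomputable def urk {d : ℕ} (M : Mat d) : ℕ :=
  ∑ᶠ (S : Set (Fin d)) (_ : IsSCC M S), cyclicity M S

/-- `k ⊙ M`: add the integer `k` to every entry. -/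
def kadd {d : ℕ} (k : ℤ) (M : Mat d) : Mat d := fun i j => (k : Zmax) + M i j

/-- Value `I M F` computed from an initial row vector, a matrix and a final
column vector. -/
def runVal {d : ℕ} (I : Fin d → Zmax) (M : Mat d) (F : Fin d → Zmax) : Zmax :=
  Finset.univ.sup fun i => Finset.univ.sup fun j => I i + M i j + F j

/-- The star-extension automaton `A'`: one extra state `q` (index `d`), and
`⋆`-labelled weight-0 transitions from final states to initial states, from final
states to `q`, a loop on `q`, and from `q` to initial states. -/
def starMu {α : Type} {d : ℕ} (μ : α → Mat d) (I F : Fin d → Zmax) :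
    α ⊕ Unit → Mat (d + 1)
  | Sum.inl a => fun i j =>
      if hi : (i : ℕ) < d then
        if hj : (j : ℕ) < d then μ a ⟨i, hi⟩ ⟨j, hj⟩ else ⊥
      else ⊥
  | Sum.inr _ => fun i j =>
      if hi : (i : ℕ) < d then
        if hj : (j : ℕ) < d then
          (if F ⟨i, hi⟩ = 0 ∧ I ⟨j, hj⟩ = 0 then (0 : Zmax) else ⊥)
        else (if F ⟨i, hi⟩ = 0 then (0 : Zmax) else ⊥)
      else
        if hj : (j : ℕ) < d then (if I ⟨j, hj⟩ = 0 then (0 : Zmax) else ⊥)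
        else (0 : Zmax)

section Basics

lemma zmax_sup_add {ι : Type*} (s : Finset ι) (f : ι → Zmax) (c : Zmax) :
    s.sup f + c = s.sup fun i => f i + c := by
  rcases s.eq_empty_or_nonempty with h | h
  · simp [h]
  · obtain ⟨i, hi, hsup⟩ := Finset.exists_mem_eq_sup s h f
    apply le_antisymm
    · rw [hsup]; exact Finset.le_sup (f := fun i => f i + c) hi
    · exact Finset.sup_le fun j hj => add_le_add_left (Finset.le_sup hj) c

lemma zmax_add_sup {ι : Type*} (s : Finset ι) (f : ι → Zmax) (c : Zmax) :
    c + s.sup f = s.sup fun i => c + f i := by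
  rw [add_comm, zmax_sup_add]; simp [add_comm]

lemma zmax_add_le_of_sup {ι κ : Type*} {s : Finset ι} {t : Finset κ} {f : ι → Zmax}
    {g : κ → Zmax} {c : Zmax} (h : ∀ i ∈ s, ∀ j ∈ t, f i + g j ≤ c) :
    s.sup f + t.sup g ≤ c := by
  rw [zmax_sup_add]
  refine Finset.sup_le fun i hi => ?_
  rw [zmax_add_sup]
  exact Finset.sup_le fun j hj => h i hi j hj

lemma tmul_assoc {d : ℕ} (A B C : Mat d) : tmul (tmul A B) C = tmul A (tmul B C) := by
  funext i j
  show (Finset.univ.sup fun k => (Finset.univ.sup fun l => A i l + B l k) + C k j)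
      = Finset.univ.sup fun l => A i l + Finset.univ.sup fun k => B l k + C k j
  simp_rw [zmax_sup_add, zmax_add_sup]
  rw [Finset.sup_comm]
  simp_rw [add_assoc]

lemma prodL_cons {d : ℕ} (M : Mat d) {L : List (Mat d)} (h : L ≠ []) :
    prodL (M :: L) = tmul M (prodL L) := by
  cases L with
  | nil => exact absurd rfl h
  | cons N L' => rfl

lemma prodL_append {d : ℕ} {L1 L2 : List (Mat d)} (h1 : L1 ≠ []) (h2 : L2 ≠ []) :
    prodL (L1 ++ L2) = tmul (prodL L1) (prodL L2) := by
  induction L1 with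
  | nil => exact absurd rfl h1
  | cons M L1' ih =>
    cases L1' with
    | nil =>
      simp only [List.singleton_append]
      rw [prodL_cons _ h2]
      rfl
    | cons N L1'' =>
      rw [List.cons_append, prodL_cons _ (by simp), ih (by simp),
        prodL_cons (L := N :: L1'') M (by simp), tmul_assoc]

lemma le_tnorm {d : ℕ} (P : Mat d) (i j : Fin d) : P i j ≤ tnorm P :=
  le_trans (Finset.le_sup (Finset.mem_univ j))
    (Finset.le_sup (f := fun i => Finset.univ.sup fun j => P i j) (Finset.mem_univ i))

lemma tnorm_le {d : ℕ} {P : Mat d} {c : Zmax} (h : ∀ i j, P i j ≤ c) : tnorm P ≤ c :=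
  Finset.sup_le fun i _ => Finset.sup_le fun j _ => h i j

end Basics
section Ext

lemma zmax_sup_fin_succ {d : ℕ} (f : Fin (d+1) → Zmax) :
    Finset.univ.sup f = (f (Fin.last d)) ⊔ (Finset.univ.sup fun i : Fin d => f i.castSucc) := by
  rw [Fin.univ_castSuccEmb, Finset.sup_cons, Finset.sup_map]
  rfl

/-- Lift a `d × d` matrix to a `(d+1) × (d+1)` matrix, padding with `⊥`. -/
def ext {d : ℕ} (M : Mat d) : Mat (d+1) := fun i j =>
  if hi : (i : ℕ) < d then
    if hj : (j : ℕ) < d then M ⟨i, hi⟩ ⟨j, hj⟩ else ⊥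
  else ⊥

variable {α : Type} {d : ℕ}

lemma starMu_inl (μ : α → Mat d) (I F : Fin d → Zmax) (a : α) :
    starMu μ I F (Sum.inl a) = ext (μ a) := rfl

lemma ext_castSucc (M : Mat d) (i j : Fin d) :
    ext M i.castSucc j.castSucc = M i j := by
  simp [ext, Fin.castSucc, i.isLt, j.isLt]

lemma ext_last_row (M : Mat d) (j : Fin (d+1)) : ext M (Fin.last d) j = ⊥ := by
  simp [ext, Fin.last]

lemma ext_last_col (M : Mat d) (i : Fin (d+1)) : ext M i (Fin.last d) = ⊥ := by
  simp [ext, Fin.last]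

lemma ext_tmul (A B : Mat d) : tmul (ext A) (ext B) = ext (tmul A B) := by
  funext i j
  show (Finset.univ.sup fun k => ext A i k + ext B k j) = _
  rw [zmax_sup_fin_succ]
  rcases Fin.eq_castSucc_or_eq_last i with ⟨i', rfl⟩ | rfl
  · rcases Fin.eq_castSucc_or_eq_last j with ⟨j', rfl⟩ | rfl
    · rw [ext_castSucc, ext_last_col, WithBot.bot_add, bot_sup_eq]
      show (Finset.univ.sup fun k : Fin d =>
        ext A i'.castSucc k.castSucc + ext B k.castSucc j'.castSucc) = _
      congr 1
      funext k
      rw [ext_castSucc, ext_castSucc]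
    · rw [ext_last_col, ext_last_col, WithBot.bot_add, bot_sup_eq,
        ext_last_col (tmul A B)]
      apply le_antisymm _ bot_le
      refine Finset.sup_le fun k _ => ?_
      rw [ext_last_col, WithBot.add_bot]
  · rw [ext_last_row, ext_last_row, WithBot.bot_add, bot_sup_eq,
      ext_last_row (tmul A B)]
    apply le_antisymm _ bot_le
    refine Finset.sup_le fun k _ => ?_
    rw [ext_last_row, WithBot.bot_add]

lemma prodL_map_ext (μ : α → Mat d) (I F : Fin d → Zmax) :
    ∀ (u : List α), u ≠ [] →
      prodL ((u.map Sum.inl).map (starMu μ I F)) = ext (prodL (u.map μ))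
  | [], h => absurd rfl h
  | [a], _ => rfl
  | a :: b :: u, _ => by
    have ih := prodL_map_ext μ I F (b :: u) (by simp)
    simp only [List.map_cons] at ih ⊢
    rw [prodL_cons (starMu μ I F (Sum.inl a)) (by simp), ih, starMu_inl,
      prodL_cons (μ a) (by simp), ext_tmul]

end Ext
section Star

variable {α : Type} {d : ℕ} (μ : α → Mat d) (I F : Fin d → Zmax)

/-- The star matrix. -/
def Smat (I F : Fin d → Zmax) : Mat (d+1) := starMu (fun _ : Unit => fun _ _ => ⊥) I F (Sum.inr ())

lemma starMu_inr : starMu μ I F (Sum.inr ()) = Smat I F := rfl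

lemma Smat_def : Smat I F = fun (i j : Fin (d+1)) =>
    if hi : (i : ℕ) < d then
      if hj : (j : ℕ) < d then
        (if F ⟨i, hi⟩ = 0 ∧ I ⟨j, hj⟩ = 0 then (0 : Zmax) else ⊥)
      else (if F ⟨i, hi⟩ = 0 then (0 : Zmax) else ⊥)
    else
      if hj : (j : ℕ) < d then (if I ⟨j, hj⟩ = 0 then (0 : Zmax) else ⊥)
      else (0 : Zmax) := rfl

lemma Smat_last_last : Smat I F (Fin.last d) (Fin.last d) = 0 := by
  simp [Smat, starMu, Fin.last]

lemma Smat_last_castSucc (k : Fin d) (hk : I k = 0) :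
    Smat I F (Fin.last d) k.castSucc = 0 := by
  simp [Smat, starMu, Fin.last, Fin.castSucc, k.isLt, hk]

lemma Smat_castSucc_last (j : Fin d) (hj : F j = 0) :
    Smat I F j.castSucc (Fin.last d) = 0 := by
  simp [Smat, starMu, Fin.last, Fin.castSucc, j.isLt, hj]

lemma Smat_castSucc_castSucc (j k : Fin d) (hj : F j = 0) (hk : I k = 0) :
    Smat I F j.castSucc k.castSucc = 0 := by
  simp [Smat, starMu, Fin.castSucc, j.isLt, k.isLt, hj, hk]

lemma Smat_le_zero (i j : Fin (d+1)) : Smat I F i j ≤ 0 := by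
  rw [Smat_def]
  dsimp only
  split_ifs <;> simp

lemma Smat_row_bot (i : Fin d) (hi : F i ≠ 0) (j : Fin (d+1)) :
    Smat I F i.castSucc j = ⊥ := by
  rw [Smat_def]
  dsimp only
  have hilt : ((i.castSucc : Fin (d+1)) : ℕ) < d := i.isLt
  rcases Nat.lt_or_ge ((j : Fin (d+1)) : ℕ) d with hj | hj
  · simp only [dif_pos hilt, dif_pos hj]
    rw [if_neg]
    rintro ⟨h1, -⟩
    exact hi (by simpa using h1)
  · simp only [dif_pos hilt, dif_neg (Nat.not_lt.2 hj)]
    rw [if_neg]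
    intro h1
    exact hi (by simpa using h1)

lemma Smat_col_bot (k : Fin d) (hk : I k ≠ 0) (i : Fin (d+1)) :
    Smat I F i k.castSucc = ⊥ := by
  rw [Smat_def]
  dsimp only
  have hklt : ((k.castSucc : Fin (d+1)) : ℕ) < d := k.isLt
  rcases Nat.lt_or_ge ((i : Fin (d+1)) : ℕ) d with hi | hi
  · simp only [dif_pos hi, dif_pos hklt]
    rw [if_neg]
    rintro ⟨-, h2⟩
    exact hk (by simpa using h2)
  · simp only [dif_neg (Nat.not_lt.2 hi), dif_pos hklt]
    rw [if_neg]
    intro h2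
    exact hk (by simpa using h2)

lemma entry_le_tmul {d : ℕ} (A B : Mat d) (i k j : Fin d) :
    A i k + B k j ≤ tmul A B i j :=
  Finset.le_sup (f := fun k => A i k + B k j) (Finset.mem_univ k)

/-- The auxiliary "initial or q" weight vector. -/
def Iq (I : Fin d → Zmax) : Fin (d+1) → Zmax :=
  fun i => if hi : (i : ℕ) < d then I ⟨i, hi⟩ else 0

lemma Iq_last : Iq I (Fin.last d) = 0 := by simp [Iq, Fin.last]

lemma Iq_castSucc (i : Fin d) : Iq I i.castSucc = I i := by
  simp [Iq, Fin.castSucc, i.isLt]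

/-- Row-restricted norm: max over entries whose row is initial or `q`. -/
def vq (I : Fin d → Zmax) (P : Mat (d+1)) : Zmax :=
  Finset.univ.sup fun i => Finset.univ.sup fun j => Iq I i + P i j

lemma le_vq (P : Mat (d+1)) (i j : Fin (d+1)) : Iq I i + P i j ≤ vq I P :=
  le_trans (Finset.le_sup (f := fun j => Iq I i + P i j) (Finset.mem_univ j))
    (Finset.le_sup (f := fun i => Finset.univ.sup fun j => Iq I i + P i j) (Finset.mem_univ i))

lemma vq_le_tnorm (hI : ∀ i, I i = 0 ∨ I i = ⊥) (P : Mat (d+1)) :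
    vq I P ≤ tnorm P := by
  refine Finset.sup_le fun i _ => Finset.sup_le fun j _ => ?_
  have h0 : Iq I i ≤ 0 := by
    rcases Fin.eq_castSucc_or_eq_last i with ⟨i', rfl⟩ | rfl
    · rw [Iq_castSucc]; rcases hI i' with h | h <;> simp [h]
    · rw [Iq_last]
  calc Iq I i + P i j ≤ 0 + P i j := add_le_add_left h0 _
    _ = P i j := zero_add _
    _ ≤ tnorm P := le_tnorm P i j

end Star
section Z2E

lemma z2e_bot : z2e (⊥ : Zmax) = ⊥ := rfl

lemma z2e_coe (z : ℤ) : z2e (z : Zmax) = ((z : ℝ) : EReal) := rfl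

lemma z2e_zero : z2e (0 : Zmax) = 0 := by
  show z2e ((0 : ℤ) : Zmax) = 0
  rw [z2e_coe]; norm_num

lemma z2e_mono : Monotone z2e := by
  intro a b hab
  induction a using WithBot.recBotCoe with
  | bot => exact bot_le
  | coe x =>
    induction b using WithBot.recBotCoe with
    | bot => exact absurd hab (WithBot.not_coe_le_bot x)
    | coe y =>
      rw [z2e_coe, z2e_coe, EReal.coe_le_coe_iff, Int.cast_le]
      exact_mod_cast hab

lemma z2e_add (a b : Zmax) : z2e (a + b) = z2e a + z2e b := by
  induction a using WithBot.recBotCoe with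
  | bot => rw [WithBot.bot_add, z2e_bot]; exact (EReal.bot_add _).symm
  | coe x =>
    induction b using WithBot.recBotCoe with
    | bot => rw [WithBot.add_bot, z2e_bot]; exact (EReal.add_bot _).symm
    | coe y =>
      rw [← WithBot.coe_add, z2e_coe, z2e_coe, z2e_coe]
      push_cast
      rfl

end Z2E

section Lower

variable {α : Type} {d : ℕ} (μ : α → Mat d) (I F : Fin d → Zmax)

lemma runVal_ge {M : Mat d} {i j : Fin d} (hi : I i = 0) (hj : F j = 0) :
    M i j ≤ runVal I M F := by
  have h : I i + M i j + F j = M i j := by rw [hi, hj, zero_add, add_zero]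
  calc M i j = I i + M i j + F j := h.symm
    _ ≤ Finset.univ.sup fun j => I i + M i j + F j :=
        Finset.le_sup (f := fun j => I i + M i j + F j) (Finset.mem_univ j)
    _ ≤ runVal I M F :=
        Finset.le_sup (f := fun i => Finset.univ.sup fun j => I i + M i j + F j)
          (Finset.mem_univ i)

lemma Iq_zero_or_bot (hI : ∀ i, I i = 0 ∨ I i = ⊥) (k : Fin (d+1)) :
    Iq I k = 0 ∨ Iq I k = ⊥ := by
  rcases Fin.eq_castSucc_or_eq_last k with ⟨k', rfl⟩ | rfl
  · rw [Iq_castSucc]; exact hI k'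
  · rw [Iq_last]; exact Or.inl rfl

lemma Smat_last_of_Iq {k : Fin (d+1)} (h : Iq I k = 0) :
    Smat I F (Fin.last d) k = 0 := by
  rcases Fin.eq_castSucc_or_eq_last k with ⟨k', rfl⟩ | rfl
  · exact Smat_last_castSucc I F k' (by rwa [Iq_castSucc] at h)
  · exact Smat_last_last I F

lemma Smat_of_F_Iq {j : Fin d} (hj : F j = 0) {k : Fin (d+1)} (h : Iq I k = 0) :
    Smat I F j.castSucc k = 0 := by
  rcases Fin.eq_castSucc_or_eq_last k with ⟨k', rfl⟩ | rfl
  · exact Smat_castSucc_castSucc I F j k' hj (by rwa [Iq_castSucc] at h)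
  · exact Smat_castSucc_last I F j hj

lemma runVal_le_vq_ext (hF : ∀ i, F i = 0 ∨ F i = ⊥) (M : Mat d) :
    runVal I M F ≤ vq I (ext M) := by
  refine Finset.sup_le fun i _ => Finset.sup_le fun j _ => ?_
  rcases hF j with hj | hj
  · calc I i + M i j + F j = Iq I i.castSucc + ext M i.castSucc j.castSucc := by
          rw [hj, add_zero, Iq_castSucc, ext_castSucc]
      _ ≤ vq I (ext M) := le_vq I _ _ _
  · rw [hj, WithBot.add_bot]; exact bot_le

lemma zero_le_vq_S : (0 : Zmax) ≤ vq I (Smat I F) := by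
  calc (0 : Zmax) = Iq I (Fin.last d) + Smat I F (Fin.last d) (Fin.last d) := by
        rw [Iq_last, Smat_last_last, add_zero]
    _ ≤ vq I (Smat I F) := le_vq I _ _ _

lemma vq_step0 (hI : ∀ i, I i = 0 ∨ I i = ⊥) (P : Mat (d+1)) :
    vq I P ≤ vq I (tmul (Smat I F) P) := by
  refine Finset.sup_le fun k _ => Finset.sup_le fun j _ => ?_
  rcases Iq_zero_or_bot I hI k with h0 | h0
  · calc Iq I k + P k j = Smat I F (Fin.last d) k + P k j := by
          rw [h0, Smat_last_of_Iq I F h0]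
      _ ≤ tmul (Smat I F) P (Fin.last d) j := entry_le_tmul _ _ _ _ _
      _ = Iq I (Fin.last d) + tmul (Smat I F) P (Fin.last d) j := by
          rw [Iq_last, zero_add]
      _ ≤ vq I (tmul (Smat I F) P) := le_vq I _ _ _
  · rw [h0, WithBot.bot_add]; exact bot_le

lemma vq_step1 (hI : ∀ i, I i = 0 ∨ I i = ⊥) (hF : ∀ i, F i = 0 ∨ F i = ⊥)
    (M : Mat d) (P : Mat (d+1)) :
    runVal I M F + vq I P ≤ vq I (tmul (ext M) (tmul (Smat I F) P)) := by
  refine zmax_add_le_of_sup fun i _ k _ => ?_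
  refine zmax_add_le_of_sup fun j _ j' _ => ?_
  rcases hI i with hi | hi
  · rcases hF j with hj | hj
    · rcases Iq_zero_or_bot I hI k with h0 | h0
      · calc (I i + M i j + F j) + (Iq I k + P k j')
            = M i j + (Smat I F j.castSucc k + P k j') := by
              rw [hi, hj, zero_add, add_zero, h0, zero_add, Smat_of_F_Iq I F hj h0, zero_add]
          _ ≤ M i j + tmul (Smat I F) P j.castSucc j' :=
              add_le_add_right (entry_le_tmul _ _ _ _ _) _
          _ = ext M i.castSucc j.castSucc + tmul (Smat I F) P j.castSucc j' := by
              rw [ext_castSucc]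
          _ ≤ tmul (ext M) (tmul (Smat I F) P) i.castSucc j' := entry_le_tmul _ _ _ _ _
          _ = Iq I i.castSucc + tmul (ext M) (tmul (Smat I F) P) i.castSucc j' := by
              rw [Iq_castSucc, hi, zero_add]
          _ ≤ _ := le_vq I _ _ _
      · rw [h0, WithBot.bot_add, WithBot.add_bot]; exact bot_le
    · rw [hj, WithBot.add_bot, WithBot.bot_add]; exact bot_le
  · rw [hi, WithBot.bot_add, WithBot.bot_add]; exact bot_le

lemma vq_step1' (hI : ∀ i, I i = 0 ∨ I i = ⊥) (hF : ∀ i, F i = 0 ∨ F i = ⊥)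
    (M : Mat d) :
    runVal I M F ≤ vq I (tmul (ext M) (Smat I F)) := by
  refine Finset.sup_le fun i _ => Finset.sup_le fun j _ => ?_
  rcases hI i with hi | hi
  · rcases hF j with hj | hj
    · calc I i + M i j + F j
          = ext M i.castSucc j.castSucc + Smat I F j.castSucc (Fin.last d) := by
            rw [hi, hj, zero_add, add_zero, ext_castSucc, Smat_castSucc_last I F j hj, add_zero]
        _ ≤ tmul (ext M) (Smat I F) i.castSucc (Fin.last d) := entry_le_tmul _ _ _ _ _
        _ = Iq I i.castSucc + tmul (ext M) (Smat I F) i.castSucc (Fin.last d) := by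
            rw [Iq_castSucc, hi, zero_add]
        _ ≤ _ := le_vq I _ _ _
    · rw [hj, WithBot.add_bot]; exact bot_le
  · rw [hi, WithBot.bot_add]; exact bot_le

end Lower
section Main

variable {α : Type} {d : ℕ} (μ : α → Mat d) (I F : Fin d → Zmax)

lemma list_decomp : ∀ (w : List (α ⊕ Unit)),
    (∃ u : List α, w = u.map Sum.inl) ∨
    (∃ (u : List α) (w' : List (α ⊕ Unit)), w = u.map Sum.inl ++ Sum.inr () :: w') := by
  intro w
  induction w with
  | nil => exact Or.inl ⟨[], rfl⟩
  | cons x w ih =>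
    rcases x with a | y
    · rcases ih with ⟨u, rfl⟩ | ⟨u, w', rfl⟩
      · exact Or.inl ⟨a :: u, rfl⟩
      · exact Or.inr ⟨a :: u, w', rfl⟩
    · cases y
      exact Or.inr ⟨[], w, rfl⟩

lemma lower_key (hI : ∀ i, I i = 0 ∨ I i = ⊥) (hF : ∀ i, F i = 0 ∨ F i = ⊥)
    (r : ℝ) (hr : r ≤ 0)
    (hA : ∀ u : List α, u ≠ [] →
      ((u.length * r : ℝ) : EReal) ≤ z2e (runVal I (prodL (u.map μ)) F)) :
    ∀ (n : ℕ) (w : List (α ⊕ Unit)), w.length ≤ n → w ≠ [] →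
      ((w.length * r : ℝ) : EReal) ≤ z2e (vq I (prodL (w.map (starMu μ I F)))) := by
  intro n
  induction n with
  | zero =>
    intro w hlen hne
    exact absurd (List.length_eq_zero_iff.1 (Nat.le_zero.1 hlen)) hne
  | succ n IH =>
    intro w hlen hne
    rcases list_decomp w with ⟨u, rfl⟩ | ⟨u, w', rfl⟩
    · have hu : u ≠ [] := by rintro rfl; exact hne rfl
      rw [prodL_map_ext μ I F u hu, List.length_map]
      exact le_trans (hA u hu) (z2e_mono (runVal_le_vq_ext I F hF _))
    · by_cases hu : u = []
      · subst hu
        by_cases hw' : w' = []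
        · subst hw'
          show (((1 : ℕ) * r : ℝ) : EReal) ≤ z2e (vq I (Smat I F))
          calc (((1 : ℕ) * r : ℝ) : EReal) ≤ ((0 : ℝ) : EReal) := by
                exact_mod_cast (by nlinarith : ((1:ℕ) : ℝ) * r ≤ 0)
            _ = z2e 0 := by rw [z2e_zero]; rfl
            _ ≤ _ := z2e_mono (zero_le_vq_S I F)
        · have hlen' : w'.length ≤ n := by
            simpa using Nat.succ_le_succ_iff.1 (by simpa using hlen)
          have IH' := IH w' hlen' hw'
          have hprod : prodL ((([] : List α).map Sum.inl ++ Sum.inr () :: w').map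
              (starMu μ I F)) = tmul (Smat I F) (prodL (w'.map (starMu μ I F))) := by
            show prodL (starMu μ I F (Sum.inr ()) :: w'.map (starMu μ I F)) = _
            rw [prodL_cons _ (by simp [hw']), starMu_inr]
          rw [hprod]
          have hlen2 : ((([] : List α).map Sum.inl ++ Sum.inr () :: w').length : ℝ)
              = w'.length + 1 := by simp
          rw [hlen2]
          calc (((w'.length + 1 : ℝ) * r : ℝ) : EReal)
              ≤ ((w'.length * r : ℝ) : EReal) := by
                apply EReal.coe_le_coe_iff.2; nlinarith
            _ ≤ z2e (vq I (prodL (w'.map (starMu μ I F)))) := IH'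
            _ ≤ _ := z2e_mono (vq_step0 I F hI _)
      · by_cases hw' : w' = []
        · subst hw'
          have hprod : prodL ((u.map Sum.inl ++ [Sum.inr ()]).map (starMu μ I F))
              = tmul (ext (prodL (u.map μ))) (Smat I F) := by
            rw [List.map_append, prodL_append (by simp [hu]) (by simp),
              prodL_map_ext μ I F u hu]
            rfl
          rw [hprod]
          have hlen2 : ((u.map Sum.inl ++ [Sum.inr ()]).length : ℝ)
              = u.length + 1 := by simp
          rw [hlen2]
          calc (((u.length + 1 : ℝ) * r : ℝ) : EReal)
              ≤ ((u.length * r : ℝ) : EReal) := by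
                apply EReal.coe_le_coe_iff.2; nlinarith
            _ ≤ z2e (runVal I (prodL (u.map μ)) F) := hA u hu
            _ ≤ _ := z2e_mono (vq_step1' I F hI hF _)
        · have hlen' : w'.length ≤ n := by
            have : (u.map Sum.inl ++ Sum.inr () :: w').length
                = u.length + w'.length + 1 := by simp; omega
            omega
          have IH' := IH w' hlen' hw'
          have hprod : prodL ((u.map Sum.inl ++ Sum.inr () :: w').map (starMu μ I F))
              = tmul (ext (prodL (u.map μ)))
                  (tmul (Smat I F) (prodL (w'.map (starMu μ I F)))) := by
            rw [List.map_append, prodL_append (by simp [hu]) (by simp),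
              prodL_map_ext μ I F u hu, List.map_cons,
              prodL_cons _ (by simp [hw']), starMu_inr]
          rw [hprod]
          have hlen2 : ((u.map Sum.inl ++ Sum.inr () :: w').length : ℝ)
              = u.length + w'.length + 1 := by push_cast [List.length_append, List.length_map, List.length_cons]; ring
          rw [hlen2]
          calc (((u.length + w'.length + 1 : ℝ) * r : ℝ) : EReal)
              ≤ ((u.length * r + w'.length * r : ℝ) : EReal) := by
                apply EReal.coe_le_coe_iff.2; nlinarith
            _ = ((u.length * r : ℝ) : EReal) + ((w'.length * r : ℝ) : EReal) :=
                EReal.coe_add _ _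
            _ ≤ z2e (runVal I (prodL (u.map μ)) F)
                + z2e (vq I (prodL (w'.map (starMu μ I F)))) :=
                add_le_add (hA u hu) IH'
            _ = z2e (runVal I (prodL (u.map μ)) F
                + vq I (prodL (w'.map (starMu μ I F)))) := (z2e_add _ _).symm
            _ ≤ _ := z2e_mono (vq_step1 I F hI hF _ _)

end Main
section Upper

variable {α : Type} {d : ℕ} (μ : α → Mat d) (I F : Fin d → Zmax)

/-- Rows indexed by non-final states of `A` are identically `⊥`. -/
def RowsOK (F : Fin d → Zmax) (P : Mat (d+1)) : Prop :=
  ∀ (i : Fin d) (j : Fin (d+1)), F i ≠ 0 → P i.castSucc j = ⊥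

lemma rowsOK_S : RowsOK F (Smat I F) := fun i j hi => Smat_row_bot I F i hi j

lemma rowsOK_tmul {P : Mat (d+1)} (h : RowsOK F P) (Q : Mat (d+1)) :
    RowsOK F (tmul P Q) := by
  intro i j hi
  apply le_antisymm _ bot_le
  refine Finset.sup_le fun k _ => ?_
  rw [h i k hi, WithBot.bot_add]

lemma upper_step (M : Mat d) {P : Mat (d+1)} (hP : RowsOK F P) :
    tnorm (tmul (tmul (Smat I F) (ext M)) P) ≤ runVal I M F + tnorm P := by
  refine tnorm_le fun i j => ?_
  show (Finset.univ.sup fun k => tmul (Smat I F) (ext M) i k + P k j) ≤ _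
  refine Finset.sup_le fun k _ => ?_
  show (Finset.univ.sup fun l => Smat I F i l + ext M l k) + P k j ≤ _
  rw [zmax_sup_add]
  refine Finset.sup_le fun l _ => ?_
  rcases Fin.eq_castSucc_or_eq_last l with ⟨l', rfl⟩ | rfl
  · by_cases hIl : I l' = 0
    · rcases Fin.eq_castSucc_or_eq_last k with ⟨k', rfl⟩ | rfl
      · by_cases hFk : F k' = 0
        · calc Smat I F i l'.castSucc + ext M l'.castSucc k'.castSucc + P k'.castSucc j
              ≤ 0 + M l' k' + P k'.castSucc j := by
                rw [ext_castSucc]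
                exact add_le_add_left (add_le_add_left (Smat_le_zero I F _ _) _) _
            _ = M l' k' + P k'.castSucc j := by rw [zero_add]
            _ ≤ runVal I M F + tnorm P :=
                add_le_add (runVal_ge I F hIl hFk) (le_tnorm P _ _)
        · rw [hP k' j hFk, WithBot.add_bot]; exact bot_le
      · rw [ext_last_col, WithBot.add_bot, WithBot.bot_add]; exact bot_le
    · rw [Smat_col_bot I F l' hIl i, WithBot.bot_add, WithBot.bot_add]; exact bot_le
  · rw [ext_last_row, WithBot.add_bot, WithBot.bot_add]; exact bot_le

/-- The word `(⋆u)^m ⋆`. -/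
def starWord (u : List α) : ℕ → List (α ⊕ Unit)
  | 0 => [Sum.inr ()]
  | m+1 => (Sum.inr () :: u.map Sum.inl) ++ starWord u m

lemma starWord_ne_nil (u : List α) (m : ℕ) : starWord u m ≠ [] := by
  cases m <;> simp [starWord]

lemma starWord_length (u : List α) : ∀ m : ℕ,
    (starWord u m).length = m * (u.length + 1) + 1
  | 0 => by simp [starWord]
  | m+1 => by
    simp [starWord, starWord_length u m]
    ring

lemma upper_main (u : List α) (hu : u ≠ []) (m : ℕ) :
    RowsOK F (prodL ((starWord u m).map (starMu μ I F))) ∧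
    tnorm (prodL ((starWord u m).map (starMu μ I F)))
      ≤ m • runVal I (prodL (u.map μ)) F := by
  induction m with
  | zero =>
    constructor
    · show RowsOK F (Smat I F)
      exact rowsOK_S I F
    · show tnorm (Smat I F) ≤ 0 • _
      rw [zero_nsmul]
      exact tnorm_le (Smat_le_zero I F)
  | succ m ih =>
    have hsplit : prodL ((starWord u (m+1)).map (starMu μ I F))
        = tmul (tmul (Smat I F) (ext (prodL (u.map μ))))
            (prodL ((starWord u m).map (starMu μ I F))) := by
      show prodL (((Sum.inr () :: u.map Sum.inl) ++ starWord u m).map (starMu μ I F)) = _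
      rw [List.map_append, prodL_append (by simp) (by simp [starWord_ne_nil]),
        List.map_cons, prodL_cons _ (by simp [hu]), prodL_map_ext μ I F u hu, starMu_inr]
    rw [hsplit]
    refine ⟨rowsOK_tmul F (rowsOK_tmul F (rowsOK_S I F) _) _, ?_⟩
    calc tnorm _ ≤ runVal I (prodL (u.map μ)) F
          + tnorm (prodL ((starWord u m).map (starMu μ I F))) :=
        upper_step I F _ ih.1
      _ ≤ runVal I (prodL (u.map μ)) F + m • runVal I (prodL (u.map μ)) F :=
        add_le_add_right ih.2 _
      _ = (m+1) • runVal I (prodL (u.map μ)) F := by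
        rw [succ_nsmul, add_comm]

lemma nsmul_coe (m : ℕ) (z : ℤ) : m • ((z : ℤ) : Zmax) = ((m * z : ℤ) : Zmax) := by
  induction m with
  | zero => rw [zero_nsmul]; norm_num
  | succ m ih =>
    rw [succ_nsmul, ih, ← WithBot.coe_add]
    congr 1
    push_cast
    ring

end Upper
section Final

variable {α : Type} {d : ℕ} (μ : α → Mat d) (I F : Fin d → Zmax)

lemma ereal_natCast_pos {k : ℕ} (hk : 0 < k) : (0 : EReal) < (k : EReal) := by
  rw [show (0 : EReal) = ((0 : ℕ) : EReal) by simp]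
  exact EReal.natCast_lt_iff.2 hk

lemma z2e_nonneg_iff (x : Zmax) : 0 ≤ z2e x ↔ (0 : Zmax) ≤ x := by
  induction x using WithBot.recBotCoe with
  | bot =>
    simp only [z2e_bot]
    constructor
    · intro h; exact absurd (le_bot_iff.1 h) (by simp)
    · intro h; exact absurd (le_bot_iff.1 h) (by simp)
  | coe z =>
    rw [z2e_coe]
    constructor
    · intro h
      have : (0 : ℝ) ≤ (z : ℝ) := by exact_mod_cast h
      exact_mod_cast (by exact_mod_cast this : (0 : ℤ) ≤ z)
    · intro h
      have : (0 : ℤ) ≤ z := by exact_mod_cast h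
      exact_mod_cast (by exact_mod_cast this : ((0 : ℝ) : EReal) ≤ ((z : ℝ) : EReal))

lemma part2_key (hI : ∀ i, I i = 0 ∨ I i = ⊥) (hF : ∀ i, F i = 0 ∨ F i = ⊥)
    (u : List α) (hu : u ≠ []) :
    sInf {x : EReal | ∃ w : List (α ⊕ Unit), w ≠ [] ∧
        x = z2e (tnorm (prodL (w.map (starMu μ I F)))) / (w.length : EReal)} ≤
      z2e (runVal I (prodL (u.map μ)) F) / ((u.length + 1 : ℕ) : EReal) := by
  obtain ⟨z, hz⟩ | hbot : (∃ z : ℤ, runVal I (prodL (u.map μ)) F = (z : Zmax)) ∨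
      runVal I (prodL (u.map μ)) F = ⊥ := by
    induction runVal I (prodL (u.map μ)) F using WithBot.recBotCoe with
    | bot => exact Or.inr rfl
    | coe z => exact Or.inl ⟨z, rfl⟩
  · -- finite value
    set n := u.length with hn
    have key : ∀ m : ℕ,
        sInf {x : EReal | ∃ w : List (α ⊕ Unit), w ≠ [] ∧
          x = z2e (tnorm (prodL (w.map (starMu μ I F)))) / (w.length : EReal)} ≤
        (((((m : ℝ) + 1) * z) / (((m : ℝ) + 1) * ((n : ℝ) + 1) + 1) : ℝ) : EReal) := by
      intro m
      refine le_trans (sInf_le ⟨starWord u (m+1), starWord_ne_nil u (m+1), rfl⟩) ?_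
      have h2 := (upper_main μ I F u hu (m+1)).2
      rw [hz, nsmul_coe] at h2
      have h3 : z2e (tnorm (prodL ((starWord u (m+1)).map (starMu μ I F))))
          ≤ ((((m+1 : ℕ) * z : ℤ) : ℝ) : EReal) :=
        le_trans (z2e_mono h2) (le_of_eq (z2e_coe _))
      have hlen : ((starWord u (m+1)).length : EReal)
          = ((((m+1) * (n+1) + 1 : ℕ) : ℝ) : EReal) := by
        rw [starWord_length, EReal.coe_coe_eq_natCast]
      calc z2e (tnorm (prodL ((starWord u (m+1)).map (starMu μ I F))))
            / ((starWord u (m+1)).length : EReal)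
          ≤ ((((m+1 : ℕ) * z : ℤ) : ℝ) : EReal) / ((starWord u (m+1)).length : EReal) := by
            refine EReal.div_le_div_right_of_nonneg ?_ h3
            exact le_of_lt (ereal_natCast_pos (by simp [starWord_length]))
        _ = (((((m : ℝ) + 1) * z) / (((m : ℝ) + 1) * ((n : ℝ) + 1) + 1) : ℝ) : EReal) := by
            rw [hlen, ← EReal.coe_div]
            congr 1
            push_cast
            ring_nf
    have tend : Filter.Tendsto
        (fun m : ℕ => (((((m : ℝ) + 1) * z) / (((m : ℝ) + 1) * ((n : ℝ) + 1) + 1) : ℝ)))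
        atTop (nhds ((z : ℝ) / ((n : ℝ) + 1))) := by
      have h0 : Filter.Tendsto (fun m : ℕ => (1 : ℝ) / ((m : ℝ) + 1)) atTop (nhds 0) :=
        tendsto_one_div_add_atTop_nhds_zero_nat
      have h1 : Filter.Tendsto (fun m : ℕ => ((n : ℝ) + 1) + 1 / ((m : ℝ) + 1)) atTop
          (nhds ((n : ℝ) + 1)) := by
        simpa using tendsto_const_nhds.add h0
      have h2 : Filter.Tendsto (fun m : ℕ => (z : ℝ) / (((n : ℝ) + 1) + 1 / ((m : ℝ) + 1)))
          atTop (nhds ((z : ℝ) / ((n : ℝ) + 1))) :=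
        Filter.Tendsto.div tendsto_const_nhds h1 (by positivity)
      refine h2.congr fun m => ?_
      have hm : ((m : ℝ) + 1) ≠ 0 := by positivity
      field_simp
    have := ge_of_tendsto' (EReal.tendsto_coe.2 tend) key
    refine le_trans this (le_of_eq ?_)
    rw [hz, z2e_coe, show ((u.length + 1 : ℕ) : EReal) = (((u.length + 1 : ℕ) : ℝ) : EReal) from
      (EReal.coe_coe_eq_natCast _).symm ▸ rfl, ← EReal.coe_div]
    norm_cast
  · -- runVal = ⊥
    refine le_trans (sInf_le ⟨starWord u 1, starWord_ne_nil u 1, rfl⟩) ?_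
    have h2 := (upper_main μ I F u hu 1).2
    rw [hbot, one_nsmul] at h2
    rw [le_bot_iff.1 h2, z2e_bot,
      EReal.bot_div_of_pos_ne_top (ereal_natCast_pos (by simp [starWord_length]))
        (EReal.natCast_ne_top _)]
    exact bot_le

lemma part1 (hI : ∀ i, I i = 0 ∨ I i = ⊥) (hF : ∀ i, F i = 0 ∨ F i = ⊥) :
    min (sInf {x : EReal | ∃ u : List α, u ≠ [] ∧
        x = z2e (runVal I (prodL (u.map μ)) F) / (u.length : EReal)}) 0 ≤
      sInf {x : EReal | ∃ w : List (α ⊕ Unit), w ≠ [] ∧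
        x = z2e (tnorm (prodL (w.map (starMu μ I F)))) / (w.length : EReal)} := by
  set r : EReal := min (sInf {x : EReal | ∃ u : List α, u ≠ [] ∧
      x = z2e (runVal I (prodL (u.map μ)) F) / (u.length : EReal)}) 0 with hrdef
  refine le_sInf fun x hx => ?_
  obtain ⟨w, hw, rfl⟩ := hx
  rcases eq_or_ne r ⊥ with hbot | hb
  · rw [hbot]; exact bot_le
  have hr0 : r ≤ 0 := min_le_right _ _
  have hrtop : r ≠ ⊤ := ne_top_of_le_ne_top (by simp) hr0
  set r' : ℝ := r.toReal with hr'def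
  have hrr : ((r' : ℝ) : EReal) = r := EReal.coe_toReal hrtop hb
  have hr'0 : r' ≤ 0 := by
    have := hr0
    rw [← hrr] at this
    exact_mod_cast this
  have hA : ∀ u : List α, u ≠ [] →
      ((u.length * r' : ℝ) : EReal) ≤ z2e (runVal I (prodL (u.map μ)) F) := by
    intro u hu
    have hmem : z2e (runVal I (prodL (u.map μ)) F) / (u.length : EReal) ∈
        {x : EReal | ∃ u : List α, u ≠ [] ∧
          x = z2e (runVal I (prodL (u.map μ)) F) / (u.length : EReal)} := ⟨u, hu, rfl⟩
    have h1 : r ≤ z2e (runVal I (prodL (u.map μ)) F) / (u.length : EReal) :=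
      le_trans (min_le_left _ _) (sInf_le hmem)
    have hpos : (0 : EReal) < (u.length : EReal) :=
      ereal_natCast_pos (List.length_pos_iff.2 hu)
    have h2 := (EReal.le_div_iff_mul_le hpos (EReal.natCast_ne_top _)).1 h1
    calc ((u.length * r' : ℝ) : EReal)
        = r * (u.length : EReal) := by
          rw [← hrr, ← EReal.coe_coe_eq_natCast, ← EReal.coe_mul, mul_comm]
      _ ≤ _ := h2
  have hkey := lower_key μ I F hI hF r' hr'0 hA w.length w (le_refl _) hw
  have hvq : ((w.length * r' : ℝ) : EReal)
      ≤ z2e (tnorm (prodL (w.map (starMu μ I F)))) :=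
    le_trans hkey (z2e_mono (vq_le_tnorm I hI _))
  have hpos : (0 : EReal) < (w.length : EReal) :=
    ereal_natCast_pos (List.length_pos_iff.2 hw)
  rw [EReal.le_div_iff_mul_le hpos (EReal.natCast_ne_top _)]
  calc r * (w.length : EReal) = ((w.length * r' : ℝ) : EReal) := by
        rw [← hrr, ← EReal.coe_coe_eq_natCast, ← EReal.coe_mul, mul_comm]
    _ ≤ _ := hvq

end Final
theorem stmt_16 {α : Type} {d : ℕ} (μ : α → Mat d) (I F : Fin d → Zmax)
    (hI : ∀ i, I i = 0 ∨ I i = ⊥) (hF : ∀ i, F i = 0 ∨ F i = ⊥) :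
    min (sInf {x : EReal | ∃ u : List α, u ≠ [] ∧
        x = z2e (runVal I (prodL (u.map μ)) F) / (u.length : EReal)}) 0 ≤
      sInf {x : EReal | ∃ w : List (α ⊕ Unit), w ≠ [] ∧
        x = z2e (tnorm (prodL (w.map (starMu μ I F)))) / (w.length : EReal)} ∧
    sInf {x : EReal | ∃ w : List (α ⊕ Unit), w ≠ [] ∧
        x = z2e (tnorm (prodL (w.map (starMu μ I F)))) / (w.length : EReal)} ≤
      sInf {x : EReal | ∃ u : List α, u ≠ [] ∧
        x = z2e (runVal I (prodL (u.map μ)) F) / ((u.length + 1 : ℕ) : EReal)} ∧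
    ((∀ u : List α, u ≠ [] → (0 : Zmax) ≤ runVal I (prodL (u.map μ)) F) ↔
      (∀ w : List (α ⊕ Unit), w ≠ [] →
        (0 : Zmax) ≤ tnorm (prodL (w.map (starMu μ I F))))) := by
  refine ⟨part1 μ I F hI hF, le_sInf fun x hx => ?_, ?_, ?_⟩
  · obtain ⟨u, hu, rfl⟩ := hx
    exact part2_key μ I F hI hF u hu
  · intro hA w hw
    have hAinf : (0 : EReal) ≤ sInf {x : EReal | ∃ u : List α, u ≠ [] ∧
        x = z2e (runVal I (prodL (u.map μ)) F) / (u.length : EReal)} := by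
      refine le_sInf fun x hx => ?_
      obtain ⟨u, hu, rfl⟩ := hx
      exact EReal.div_nonneg ((z2e_nonneg_iff _).2 (hA u hu))
        (le_of_lt (ereal_natCast_pos (List.length_pos_iff.2 hu)))
    have h0 : (0 : EReal) ≤ sInf {x : EReal | ∃ w : List (α ⊕ Unit), w ≠ [] ∧
        x = z2e (tnorm (prodL (w.map (starMu μ I F)))) / (w.length : EReal)} :=
      le_trans (le_min hAinf (le_refl 0)) (part1 μ I F hI hF)
    have h1 : (0 : EReal) ≤ z2e (tnorm (prodL (w.map (starMu μ I F))))
        / (w.length : EReal) := le_trans h0 (sInf_le ⟨w, hw, rfl⟩)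
    rw [EReal.le_div_iff_mul_le (ereal_natCast_pos (List.length_pos_iff.2 hw))
      (EReal.natCast_ne_top _), zero_mul] at h1
    exact (z2e_nonneg_iff _).1 h1
  · intro hA' u hu
    have h0 : (0 : EReal) ≤ sInf {x : EReal | ∃ w : List (α ⊕ Unit), w ≠ [] ∧
        x = z2e (tnorm (prodL (w.map (starMu μ I F)))) / (w.length : EReal)} := by
      refine le_sInf fun x hx => ?_
      obtain ⟨w, hw, rfl⟩ := hx
      exact EReal.div_nonneg ((z2e_nonneg_iff _).2 (hA' w hw))
        (le_of_lt (ereal_natCast_pos (List.length_pos_iff.2 hw)))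
    have h1 := le_trans h0 (part2_key μ I F hI hF u hu)
    rw [EReal.le_div_iff_mul_le (ereal_natCast_pos (Nat.succ_pos _))
      (EReal.natCast_ne_top _), zero_mul] at h1
    exact (z2e_nonneg_iff _).1 h1
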